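/- Let H be a poly-exact sequence on [n]. Let F ⊆ [n], s ∈ [n]\F, 0 ≤ i ≤ |F|, a ∈ ℤⁿ, and suppose H_i(F)_a ≠ 0. Then there exists b ∈ ℕ such that H_i(F ∪ {s})_{a − b·ε_s} ≠ 0. -/

import Mathlib

/-- The `s`-th standard basis vector of `ℤⁿ`. -/
def stdBasis {n : ℕ} (s : Fin n) : Fin n → ℤ := fun j => if j = s then 1 else 0

/-- A *poly-exact sequence* on `[n]`: a family of abelian groups `H_i(F)_a` indexed by subsets
`F ⊆ [n]`, homological degrees `i ∈ ℕ` and multidegrees `a ∈ ℤⁿ`, such that `H_i(∅) = 0` for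
`i > 0`, each `H_i(F)_a` vanishes for `a₁+⋯+aₙ` sufficiently small, and for each `F`,
`s ∉ F`, `i`, `a` there is a fundamental exact sequence
`H_i(F)_{a−ε_s} → H_i(F)_a → H_i(F∪{s})_a → H_{i−1}(F)_{a−ε_s} → H_{i−1}(F)_a`. -/
structure PolyExact (n : ℕ) where
  /-- the groups `H_i(F)_a` -/
  H : Finset (Fin n) → ℕ → (Fin n → ℤ) → Type
  grp : ∀ F i a, AddCommGroup (H F i a)
  /-- axiom (i): `H_i(∅)_a = 0` for `i > 0` -/
  empty_subsingleton : ∀ i a, 0 < i → Subsingleton (H ∅ i a)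
  /-- axiom (ii): `H_i(F)_a = 0` for `|a| ≪ 0` -/
  bounded_below : ∀ F i, ∃ c : ℤ, ∀ a, (∑ j, a j) ≤ c → Subsingleton (H F i a)
  /-- the map `ι_s : H_i(F)_a → H_i(F∪{s})_a` -/
  ι : ∀ (F : Finset (Fin n)) (i : ℕ) (a : Fin n → ℤ) (s : Fin n), s ∉ F →
    letI := grp F i a; letI := grp (insert s F) i a
    H F i a →+ H (insert s F) i a
  /-- the connecting map `π_s : H_{i+1}(F∪{s})_a → H_i(F)_{a−ε_s}` -/
  π : ∀ (F : Finset (Fin n)) (i : ℕ) (a : Fin n → ℤ) (s : Fin n), s ∉ F →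
    letI := grp (insert s F) (i + 1) a; letI := grp F i (a - stdBasis s)
    H (insert s F) (i + 1) a →+ H F i (a - stdBasis s)
  /-- the map `∂_s : H_i(F)_{a−ε_s} → H_i(F)_a` -/
  δ : ∀ (F : Finset (Fin n)) (i : ℕ) (a : Fin n → ℤ) (s : Fin n), s ∉ F →
    letI := grp F i (a - stdBasis s); letI := grp F i a
    H F i (a - stdBasis s) →+ H F i a
  /-- exactness at `H_i(F)_a` of `H_i(F)_{a−ε_s} → H_i(F)_a → H_i(F∪{s})_a` -/
  exact_δ_ι : ∀ F i a s (hs : s ∉ F),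
    Function.Exact (δ F i a s hs) (ι F i a s hs)
  /-- exactness at `H_{i+1}(F∪{s})_a` of
  `H_{i+1}(F)_a → H_{i+1}(F∪{s})_a → H_i(F)_{a−ε_s}` -/
  exact_ι_π : ∀ F i a s (hs : s ∉ F),
    Function.Exact (ι F (i + 1) a s hs) (π F i a s hs)
  /-- exactness at `H_i(F)_{a−ε_s}` of
  `H_{i+1}(F∪{s})_a → H_i(F)_{a−ε_s} → H_i(F)_a` -/
  exact_π_δ : ∀ F i a s (hs : s ∉ F),
    Function.Exact (π F i a s hs) (δ F i a s hs)
  /-- exactness at `H_0(F∪{s})_a`: since `H_{-1} = 0`, the map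
  `ι_s : H_0(F)_a → H_0(F∪{s})_a` is surjective -/
  ι_zero_surjective : ∀ F a s (hs : s ∉ F),
    Function.Surjective (ι F 0 a s hs)

/-- Let `H` be a poly-exact sequence on `[n]`, `F ⊆ [n]`, `s ∈ [n]\F`, `0 ≤ i ≤ |F|` and
`a ∈ ℤⁿ` with `H_i(F)_a ≠ 0`.  Then there exists `b ∈ ℕ` with `H_i(F∪{s})_{a − b·ε_s} ≠ 0`. -/
theorem polyExact_push {n : ℕ} (P : PolyExact n) (F : Finset (Fin n)) (s : Fin n)
    (hs : s ∉ F) (i : ℕ) (hi : i ≤ F.card) (a : Fin n → ℤ)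
    (hne : Nontrivial (P.H F i a)) :
    ∃ b : ℕ, Nontrivial (P.H (insert s F) i (a - (b : ℤ) • stdBasis s)) := by
  by_contra hcon
  push_neg at hcon
  -- every H_i(F∪{s})_{a - b ε} is subsingleton
  have hsub : ∀ b : ℕ, Subsingleton (P.H (insert s F) i (a - (b : ℤ) • stdBasis s)) := by
    intro b
    have := hcon b
    exact this
  -- hence H_i(F)_{a - b ε} is nontrivial for all b
  have key : ∀ b : ℕ, Nontrivial (P.H F i (a - (b : ℤ) • stdBasis s)) := by
    intro b
    induction b with
    | zero =>
      have h0 : a - ((0 : ℕ) : ℤ) • stdBasis s = a := by simp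
      rw [h0]; exact hne
    | succ b ih =>
      letI := P.grp F i (a - (b : ℤ) • stdBasis s)
      letI := P.grp (insert s F) i (a - (b : ℤ) • stdBasis s)
      letI := P.grp F i ((a - (b : ℤ) • stdBasis s) - stdBasis s)
      have hexact := P.exact_δ_ι F i (a - (b : ℤ) • stdBasis s) s hs
      have hsurj : Function.Surjective (P.δ F i (a - (b : ℤ) • stdBasis s) s hs) := by
        intro y
        have h0 : (P.ι F i (a - (b : ℤ) • stdBasis s) s hs) y = 0 :=
          (hsub b).elim _ _
        exact (hexact y).mp h0
      have heq : (a - (b : ℤ) • stdBasis s) - stdBasis s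
          = a - ((b : ℕ) + 1 : ℤ) • stdBasis s := by
        funext j; simp [stdBasis]; split <;> ring
      have hnt : Nontrivial (P.H F i ((a - (b : ℤ) • stdBasis s) - stdBasis s)) := by
        obtain ⟨x, y, hxy⟩ := ih
        obtain ⟨x', hx'⟩ := hsurj x
        obtain ⟨y', hy'⟩ := hsurj y
        exact ⟨x', y', fun h => hxy (by rw [← hx', ← hy', h])⟩
      rw [heq] at hnt
      have : ((b : ℕ) + 1 : ℤ) = ((b + 1 : ℕ) : ℤ) := by push_cast; ring
      rwa [this] at hnt
  -- contradict boundedness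
  obtain ⟨c, hc⟩ := P.bounded_below F i
  set b : ℕ := ((∑ j, a j) - c).toNat with hb
  have hsum : (∑ j, (a - (b : ℤ) • stdBasis s) j) ≤ c := by
    have : (∑ j, (a - (b : ℤ) • stdBasis s) j)
        = (∑ j, a j) - (b : ℤ) := by
      simp [Pi.sub_apply, Finset.sum_sub_distrib, stdBasis, Finset.sum_ite_eq']
    rw [this]
    have hle : ((∑ j, a j) - c) ≤ (b : ℤ) := Int.self_le_toNat _
    linarith
  have := hc _ hsum
  exact (not_nontrivial_iff_subsingleton.mpr this) (key b)
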